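/- arXiv:2404.07082 — 4 statements merged into one kernel-verified Lean document; each statement's English description precedes it below -/
import Mathlib

section
/- Let E be a complex Hilbert space, ħ > 0 a real number, and let H and S be continuous linear operators on E satisfying (adjoint H) ∘ S = S ∘ H. Then probability is conserved under the pseudo-Hermitian time evolution: for every real t and all ψ, φ ∈ E, ⟪exp((−(t/ħ) * I) • H) ψ, S (exp((−(t/ħ) * I) • H) φ)⟫ = ⟪ψ, S φ⟫, where I is the imaginary unit. -/
open InnerProductSpace ContinuousLinearMap Complex

lemma exp_intertwine_aux {E : Type*} [NormedAddCommGroup E] [InnerProductSpace ℂ E]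
    [CompleteSpace E] (A B S : E →L[ℂ] E) (h : A * S = S * B) :
    NormedSpace.exp A * S = S * NormedSpace.exp B := by
  have hn : ∀ n : ℕ, A ^ n * S = S * B ^ n := by
    intro n
    induction n with
    | zero => simp
    | succ n ih =>
      rw [pow_succ, pow_succ, mul_assoc, h, ← mul_assoc, ih, mul_assoc]
  simp only [NormedSpace.exp_eq_tsum (𝕂 := ℂ)]
  have h1 : Summable fun n : ℕ => (n.factorial : ℂ)⁻¹ • A ^ n :=
    NormedSpace.expSeries_summable' (𝕂 := ℂ) A
  have h2 : Summable fun n : ℕ => (n.factorial : ℂ)⁻¹ • B ^ n :=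
    NormedSpace.expSeries_summable' (𝕂 := ℂ) B
  calc (∑' n : ℕ, (n.factorial : ℂ)⁻¹ • A ^ n) * S
      = ∑' n : ℕ, ((n.factorial : ℂ)⁻¹ • A ^ n) * S := by
        exact ((ContinuousLinearMap.mul ℂ (E →L[ℂ] E)).flip S).map_tsum h1
    _ = ∑' n : ℕ, S * ((n.factorial : ℂ)⁻¹ • B ^ n) := by
        refine tsum_congr fun n => ?_
        rw [smul_mul_assoc, hn n, mul_smul_comm]
    _ = S * ∑' n : ℕ, (n.factorial : ℂ)⁻¹ • B ^ n := by
        exact ((ContinuousLinearMap.mul ℂ (E →L[ℂ] E)) S).map_tsum h2 |>.symm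

theorem pseudo_hermitian_probability_conservation
    {E : Type*} [NormedAddCommGroup E] [InnerProductSpace ℂ E] [CompleteSpace E]
    (hbar : ℝ) (hhbar : 0 < hbar)
    (H S : E →L[ℂ] E)
    (hqh : (ContinuousLinearMap.adjoint H) ∘L S = S ∘L H) :
    ∀ (t : ℝ) (ψ φ : E),
      ⟪(NormedSpace.exp ((-(t / hbar : ℂ) * Complex.I) • H)) ψ,
        S ((NormedSpace.exp ((-(t / hbar : ℂ) * Complex.I) • H)) φ)⟫_ℂ
        = ⟪ψ, S φ⟫_ℂ := by
  intro t ψ φ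
  set c : ℂ := -(t / hbar : ℂ) * Complex.I with hc
  set U : E →L[ℂ] E := NormedSpace.exp (c • H) with hU
  have hconj : (starRingEnd ℂ) c = -c := by
    simp [hc, Complex.conj_ofReal]
  have hadj : ContinuousLinearMap.adjoint U = NormedSpace.exp ((-c) • (ContinuousLinearMap.adjoint H)) := by
    rw [← ContinuousLinearMap.star_eq_adjoint, hU, NormedSpace.star_exp,
      star_smul, ContinuousLinearMap.star_eq_adjoint]
    congr 1
    rw [Complex.star_def, hconj]
  have hint : NormedSpace.exp ((-c) • (ContinuousLinearMap.adjoint H)) * S = S * NormedSpace.exp ((-c) • H) := by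
    apply exp_intertwine_aux
    have h' : (ContinuousLinearMap.adjoint H) * S = S * H := hqh
    rw [smul_mul_assoc, mul_smul_comm, h']
  have hcomm : Commute ((-c) • H) (c • H) := by
    exact (Commute.refl H).smul_left _ |>.smul_right _
  have hinv : NormedSpace.exp ((-c) • H) * U = 1 := by
    letI : NormedAlgebra ℚ (E →L[ℂ] E) := NormedAlgebra.restrictScalars ℚ ℂ (E →L[ℂ] E)
    rw [hU, ← NormedSpace.exp_add_of_commute hcomm]
    simp [← add_smul]
  calc ⟪U ψ, S (U φ)⟫_ℂ
      = ⟪ψ, (ContinuousLinearMap.adjoint U) (S (U φ))⟫_ℂ := by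
        rw [ContinuousLinearMap.adjoint_inner_right]
    _ = ⟪ψ, ((ContinuousLinearMap.adjoint U) * S * U) φ⟫_ℂ := rfl
    _ = ⟪ψ, S φ⟫_ℂ := by
        rw [hadj, hint, mul_assoc, hinv, mul_one]
end

section
/- Let E be a complex Hilbert space, let G : E ≃L[ℂ] E be a continuous linear equivalence (an invertible bounded operator with bounded inverse, the Dyson map), set S := (adjoint G) ∘ G, and let H be a continuous linear operator on E satisfying the pseudo-Hermiticity relation (adjoint H) ∘ S = S ∘ H. Then the similarity transform h := G ∘ H ∘ G⁻¹ is self-adjoint: adjoint h = h. -/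
open ContinuousLinearMap

theorem dyson_map_hermitian_counterpart
    {E : Type*} [NormedAddCommGroup E] [InnerProductSpace ℂ E] [CompleteSpace E]
    (G : E ≃L[ℂ] E) (H : E →L[ℂ] E)
    (hph : (ContinuousLinearMap.adjoint H) ∘L
        ((ContinuousLinearMap.adjoint (G : E →L[ℂ] E)) ∘L (G : E →L[ℂ] E))
      = ((ContinuousLinearMap.adjoint (G : E →L[ℂ] E)) ∘L (G : E →L[ℂ] E)) ∘L H) :
    ContinuousLinearMap.adjoint ((G : E →L[ℂ] E) ∘L H ∘L (G.symm : E →L[ℂ] E))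
      = (G : E →L[ℂ] E) ∘L H ∘L (G.symm : E →L[ℂ] E) := by
  set A : E →L[ℂ] E := (G : E →L[ℂ] E) with hA
  set B : E →L[ℂ] E := (G.symm : E →L[ℂ] E) with hB
  have hAB : A ∘L B = ContinuousLinearMap.id ℂ E := by
    ext x; simp [hA, hB]
  have hBA : adjoint B ∘L adjoint A = ContinuousLinearMap.id ℂ E := by
    rw [← adjoint_comp, hAB, adjoint_id]
  have hAdj : adjoint A = (adjoint A ∘L A) ∘L B := by
    rw [comp_assoc, hAB, comp_id]
  have key : adjoint H ∘L ((adjoint A ∘L A) ∘L B)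
      = ((adjoint A ∘L A) ∘L H) ∘L B := by
    rw [← comp_assoc, hph]
  rw [adjoint_comp, adjoint_comp]
  calc (adjoint B ∘L adjoint H) ∘L adjoint A
      = adjoint B ∘L (adjoint H ∘L ((adjoint A ∘L A) ∘L B)) := by
        rw [comp_assoc, ← hAdj]
    _ = adjoint B ∘L (((adjoint A ∘L A) ∘L H) ∘L B) := by rw [key]
    _ = ((adjoint B ∘L adjoint A) ∘L A) ∘L (H ∘L B) := by
        simp only [comp_assoc]
    _ = A ∘L (H ∘L B) := by rw [hBA, id_comp]
end

section
/- Fix real numbers τ and ħ, let w(x) = 1 − τ*x + τ²*x² (which is strictly positive for all x), and define the Hermitian deformed momentum operator by (p̂ f)(x) = −i*ħ*√(w(x)) * (d/dx)(fun y => √(w(y)) * f(y))(x). Then p̂ is symmetric with respect to the standard L² inner product: for all continuously differentiable f, g : ℝ → ℂ with compact support, ∫_ℝ conj((p̂ f)(x)) * g(x) dx = ∫_ℝ conj(f(x)) * (p̂ g)(x) dx. -/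
open MeasureTheory
open Set

lemma integral_deriv_eq_zero' {H : ℝ → ℂ} (h1 : ContDiff ℝ 1 H)
    (h2 : HasCompactSupport H) : ∫ x : ℝ, deriv H x = 0 := by
  have hi : Integrable (deriv H) := by
    exact ((h1.continuous_deriv le_rfl).integrable_of_hasCompactSupport h2.deriv)
  rw [← intervalIntegral.integral_Iic_add_Ioi (b := 0) hi.integrableOn hi.integrableOn,
    h2.integral_Iic_deriv_eq h1 0, h2.integral_Ioi_deriv_eq h1 0]
  ring

/-- The Hermitian position-deformed momentum operator
`(p̂ f)(x) = -i ħ √(w x) (√w · f)'(x)` with `w x = 1 - τ x + τ² x²`. -/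
noncomputable def hermitianDeformedMomentum (τ hbar : ℝ) (f : ℝ → ℂ) (x : ℝ) : ℂ :=
  -Complex.I * (hbar : ℂ) * (Real.sqrt (1 - τ * x + τ ^ 2 * x ^ 2) : ℂ) *
    deriv (fun y => (Real.sqrt (1 - τ * y + τ ^ 2 * y ^ 2) : ℂ) * f y) x

theorem hermitian_deformed_momentum_symmetric (τ hbar : ℝ) (f g : ℝ → ℂ)
    (hf : ContDiff ℝ 1 f) (hg : ContDiff ℝ 1 g)
    (hfs : HasCompactSupport f) (hgs : HasCompactSupport g) :
    ∫ x : ℝ, (starRingEnd ℂ) (hermitianDeformedMomentum τ hbar f x) * g x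
      = ∫ x : ℝ, (starRingEnd ℂ) (f x) * hermitianDeformedMomentum τ hbar g x := by
  set s : ℝ → ℂ := fun y => (Real.sqrt (1 - τ * y + τ ^ 2 * y ^ 2) : ℂ) with hs_def
  have hw : ∀ x : ℝ, (0:ℝ) < 1 - τ * x + τ ^ 2 * x ^ 2 := by
    intro x; nlinarith [sq_nonneg (2 * (τ * x) - 1)]
  have hwc : ContDiff ℝ 1 (fun x : ℝ => 1 - τ * x + τ ^ 2 * x ^ 2) := by fun_prop
  have hs : ContDiff ℝ 1 s := by
    rw [contDiff_iff_contDiffAt]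
    intro x
    exact Complex.ofRealCLM.contDiff.contDiffAt.comp x
      ((Real.contDiffAt_sqrt (hw x).ne').comp x hwc.contDiffAt)
  set F : ℝ → ℂ := fun y => s y * f y with hF_def
  set G : ℝ → ℂ := fun y => s y * g y with hG_def
  have hF : ContDiff ℝ 1 F := hs.mul hf
  have hG : ContDiff ℝ 1 G := hs.mul hg
  have hFs : HasCompactSupport F := hfs.mul_left
  have hGs : HasCompactSupport G := hgs.mul_left
  set H : ℝ → ℂ := fun y => (starRingEnd ℂ) (F y) * G y with hH_def
  have hH : ContDiff ℝ 1 H :=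
    ((Complex.conjCLE : ℂ ≃L[ℝ] ℂ).contDiff.comp hF).mul hG
  have hHs : HasCompactSupport H := hGs.mul_left
  have hderiv : ∀ x, deriv H x =
      (starRingEnd ℂ) (deriv F x) * G x + (starRingEnd ℂ) (F x) * deriv G x := by
    intro x
    have hFd := (hF.differentiable one_ne_zero x).hasDerivAt
    have hGd := (hG.differentiable one_ne_zero x).hasDerivAt
    exact (hFd.star.mul hGd).deriv
  have hzero : (∫ x : ℝ, ((starRingEnd ℂ) (deriv F x) * G x
      + (starRingEnd ℂ) (F x) * deriv G x)) = 0 := by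
    rw [← integral_congr_ae (Filter.Eventually.of_forall hderiv)]
    exact integral_deriv_eq_zero' hH hHs
  have hcontF' : Continuous (deriv F) := hF.continuous_deriv le_rfl
  have hcontG' : Continuous (deriv G) := hG.continuous_deriv le_rfl
  have hi1 : Integrable (fun x => (starRingEnd ℂ) (deriv F x) * G x) := by
    apply Continuous.integrable_of_hasCompactSupport
    · exact (Complex.continuous_conj.comp hcontF').mul (hG.continuous)
    · exact hGs.mul_left
  have hi2 : Integrable (fun x => (starRingEnd ℂ) (F x) * deriv G x) := by
    apply Continuous.integrable_of_hasCompactSupport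
    · exact (Complex.continuous_conj.comp hF.continuous).mul hcontG'
    · exact (hGs.deriv).mul_left
  rw [integral_add hi1 hi2] at hzero
  have key : (∫ x : ℝ, (starRingEnd ℂ) (deriv F x) * G x)
      = - ∫ x : ℝ, (starRingEnd ℂ) (F x) * deriv G x := by linear_combination hzero
  have e1 : ∫ x : ℝ, (starRingEnd ℂ) (hermitianDeformedMomentum τ hbar f x) * g x
      = (Complex.I * (hbar : ℂ)) * ∫ x : ℝ, (starRingEnd ℂ) (deriv F x) * G x := by
    rw [← integral_const_mul]
    refine integral_congr_ae (Filter.Eventually.of_forall fun x => ?_)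
    simp only [hermitianDeformedMomentum, hF_def, hG_def, hs_def, map_mul, map_neg,
      Complex.conj_I, Complex.conj_ofReal]
    ring
  have e2 : ∫ x : ℝ, (starRingEnd ℂ) (f x) * hermitianDeformedMomentum τ hbar g x
      = (-(Complex.I * (hbar : ℂ))) * ∫ x : ℝ, (starRingEnd ℂ) (F x) * deriv G x := by
    rw [← integral_const_mul]
    refine integral_congr_ae (Filter.Eventually.of_forall fun x => ?_)
    simp only [hermitianDeformedMomentum, hF_def, hG_def, hs_def, map_mul, map_neg,
      Complex.conj_I, Complex.conj_ofReal]
    ring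
  rw [e1, e2, key]
  ring
end

section
/- Let τ > 0, ħ > 0, ξ ∈ ℝ and C ∈ ℂ, and define Φ : ℝ → ℂ by Φ(x) = C * (1 − τ*x + τ²*x²)^{−1/2} * exp(i * (2*ξ/(τ*ħ*√3)) * (arctan((2*τ*x − 1)/√3) + π/6)). Then Φ is an eigenfunction of the Hermitian deformed momentum with eigenvalue ξ: for every real x, −i*ħ*√(1 − τ*x + τ²*x²) * (d/dx)(fun y => √(1 − τ*y + τ²*y²) * Φ(y))(x) = ξ * Φ(x). -/
/-- The deformed plane wave `Φ_ξ`. -/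
noncomputable def deformedPlaneWave (τ hbar ξ : ℝ) (C : ℂ) (x : ℝ) : ℂ :=
  C * (((1 - τ * x + τ ^ 2 * x ^ 2 : ℝ) ^ (-(1 / 2) : ℝ) : ℝ) : ℂ) *
    Complex.exp (Complex.I * ((2 * ξ / (τ * hbar * Real.sqrt 3) : ℝ) : ℂ) *
      ((Real.arctan ((2 * τ * x - 1) / Real.sqrt 3) + Real.pi / 6 : ℝ) : ℂ))

theorem deformed_plane_wave_eigenfunction (τ hbar ξ : ℝ) (hτ : 0 < τ) (hhbar : 0 < hbar)
    (C : ℂ) (x : ℝ) :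
    hermitianDeformedMomentum τ hbar (deformedPlaneWave τ hbar ξ C) x
      = (ξ : ℂ) * deformedPlaneWave τ hbar ξ C x := by
  have hw : ∀ y : ℝ, 0 < 1 - τ * y + τ ^ 2 * y ^ 2 := by
    intro y; nlinarith [sq_nonneg (τ * y - 1/2), sq_nonneg τ]
  set a : ℝ := 2 * ξ / (τ * hbar * Real.sqrt 3) with ha
  set θ : ℝ → ℝ := fun y => Real.arctan ((2 * τ * y - 1) / Real.sqrt 3) + Real.pi / 6 with hθ
  -- √w · Φ = C exp(i a θ)
  have hkey : (fun y => (Real.sqrt (1 - τ * y + τ ^ 2 * y ^ 2) : ℂ) *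
      deformedPlaneWave τ hbar ξ C y)
      = fun y => C * Complex.exp (Complex.I * (a : ℂ) * ((θ y : ℝ) : ℂ)) := by
    funext y
    have hwy := hw y
    have h1 : Real.sqrt (1 - τ * y + τ ^ 2 * y ^ 2) *
        (1 - τ * y + τ ^ 2 * y ^ 2) ^ (-(1 / 2) : ℝ) = 1 := by
      rw [Real.sqrt_eq_rpow, ← Real.rpow_add hwy]
      norm_num
    unfold deformedPlaneWave
    have harg : Complex.I * ((2 * ξ / (τ * hbar * Real.sqrt 3) : ℝ) : ℂ) *
        ((Real.arctan ((2 * τ * y - 1) / Real.sqrt 3) + Real.pi / 6 : ℝ) : ℂ)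
        = Complex.I * (a : ℂ) * ((θ y : ℝ) : ℂ) := rfl
    rw [harg]
    calc (Real.sqrt (1 - τ * y + τ ^ 2 * y ^ 2) : ℂ) *
          (C * (((1 - τ * y + τ ^ 2 * y ^ 2 : ℝ) ^ (-(1 / 2) : ℝ) : ℝ) : ℂ) *
            Complex.exp (Complex.I * (a : ℂ) * ((θ y : ℝ) : ℂ)))
        = ((Real.sqrt (1 - τ * y + τ ^ 2 * y ^ 2) *
            (1 - τ * y + τ ^ 2 * y ^ 2) ^ (-(1 / 2) : ℝ) : ℝ) : ℂ) *
          (C * Complex.exp (Complex.I * (a : ℂ) * ((θ y : ℝ) : ℂ))) := by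
          rw [Complex.ofReal_mul]; ring
      _ = C * Complex.exp (Complex.I * (a : ℂ) * ((θ y : ℝ) : ℂ)) := by
          rw [h1, Complex.ofReal_one, one_mul]
  have h3 : (0:ℝ) < Real.sqrt 3 := Real.sqrt_pos.mpr (by norm_num)
  set u : ℝ := (2 * τ * x - 1) / Real.sqrt 3 with hu
  -- derivative of θ
  have hθd : HasDerivAt θ ((1 / (1 + u ^ 2)) * (2 * τ / Real.sqrt 3)) x := by
    have hlin : HasDerivAt (fun y : ℝ => (2 * τ * y - 1) / Real.sqrt 3)
        (2 * τ / Real.sqrt 3) x := by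
      have := (((hasDerivAt_id x).const_mul (2 * τ)).sub_const 1).div_const (Real.sqrt 3)
      simpa using this
    have := (Real.hasDerivAt_arctan u).comp x hlin
    have h2 := this.add_const (Real.pi / 6)
    simpa [hθ, Function.comp, hu] using h2
  set d : ℝ := (1 / (1 + u ^ 2)) * (2 * τ / Real.sqrt 3) with hd
  have hD : HasDerivAt (fun y => C * Complex.exp (Complex.I * (a : ℂ) * ((θ y : ℝ) : ℂ)))
      (C * (Complex.exp (Complex.I * (a : ℂ) * ((θ x : ℝ) : ℂ)) * (Complex.I * (a : ℂ) * (d : ℂ)))) x := by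
    have h1 : HasDerivAt (fun y : ℝ => ((θ y : ℝ) : ℂ)) ((d : ℝ) : ℂ) x := hθd.ofReal_comp
    have h2 := (h1.const_mul (Complex.I * (a : ℂ))).cexp
    have h3 := h2.const_mul C
    simpa [mul_assoc] using h3
  -- the real scalar identity
  have hreal : hbar * Real.sqrt (1 - τ * x + τ ^ 2 * x ^ 2) * (a * d)
      = ξ * (1 - τ * x + τ ^ 2 * x ^ 2) ^ (-(1 / 2) : ℝ) := by
    have hwx := hw x
    have hs3 : Real.sqrt 3 * Real.sqrt 3 = 3 := Real.mul_self_sqrt (by norm_num)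
    have hrw : (1 - τ * x + τ ^ 2 * x ^ 2) ^ (-(1 / 2) : ℝ)
        = Real.sqrt (1 - τ * x + τ ^ 2 * x ^ 2) / (1 - τ * x + τ ^ 2 * x ^ 2) := by
      rw [Real.rpow_neg hwx.le, ← Real.sqrt_eq_rpow, eq_div_iff hwx.ne',
        inv_mul_eq_div, div_eq_iff (Real.sqrt_pos.mpr hwx).ne',
        Real.mul_self_sqrt hwx.le]
    have h1u : 1 + ((2 * τ * x - 1) / Real.sqrt 3) ^ 2
        = 4 * (1 - τ * x + τ ^ 2 * x ^ 2) / 3 := by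
      rw [div_pow, Real.sq_sqrt (by norm_num : (0:ℝ) ≤ 3)]
      field_simp
      ring
    rw [hrw, ha, hd, hu, h1u]
    field_simp
    linear_combination (-4 * ξ) * hs3
  -- assemble
  unfold hermitianDeformedMomentum
  rw [hkey, hD.deriv]
  unfold deformedPlaneWave
  have harg : Complex.I * ((2 * ξ / (τ * hbar * Real.sqrt 3) : ℝ) : ℂ) *
      ((Real.arctan ((2 * τ * x - 1) / Real.sqrt 3) + Real.pi / 6 : ℝ) : ℂ)
      = Complex.I * (a : ℂ) * ((θ x : ℝ) : ℂ) := rfl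
  rw [harg]
  have hC : ((hbar * Real.sqrt (1 - τ * x + τ ^ 2 * x ^ 2) * (a * d) : ℝ) : ℂ)
      = ((ξ * (1 - τ * x + τ ^ 2 * x ^ 2) ^ (-(1 / 2) : ℝ) : ℝ) : ℂ) :=
    congrArg Complex.ofReal hreal
  push_cast at hC
  linear_combination (C * Complex.exp (Complex.I * (a : ℂ) * ((θ x : ℝ) : ℂ))) * hC -
    ((hbar : ℂ) * (Real.sqrt (1 - τ * x + τ ^ 2 * x ^ 2) : ℂ) * (a : ℂ) * (d : ℂ) * C *
      Complex.exp (Complex.I * (a : ℂ) * ((θ x : ℝ) : ℂ))) * Complex.I_mul_I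
end
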